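/- For every positive integer r, every g ∈ {0,1}, and every complex number z with |1 − z| ≤ 1, one has |A_{r,g}(z)| ≤ C(2r−g, r), where C(2r−g, r) is the ordinary binomial coefficient. -/

import Mathlib

/-- The generalized binomial coefficient `C(α, m) = α(α-1)⋯(α-m+1)/m!`. -/
noncomputable def genChoose (α : ℝ) (m : ℕ) : ℝ :=
  (∏ i ∈ Finset.range m, (α - i)) / m.factorial

/-- The polynomial `A_{r,g}(z) = Σ_{m=0}^{r} C(r-g+1/4, m) C(2r-g-m, r-g) (-z)^m`. -/
noncomputable def Apoly (r g : ℕ) (z : ℂ) : ℂ :=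
  ∑ m ∈ Finset.range (r + 1),
    ((genChoose ((r : ℝ) - g + 1/4) m *
      genChoose (2 * (r : ℝ) - g - m) (r - g) : ℝ) : ℂ) * (-z) ^ m

/-- The polynomial `B_{r,g}(z) = Σ_{m=0}^{r-g} C(r-1/4, m) C(2r-g-m, r) (-z)^m`. -/
noncomputable def Bpoly (r g : ℕ) (z : ℂ) : ℂ :=
  ∑ m ∈ Finset.range (r - g + 1),
    ((genChoose ((r : ℝ) - 1/4) m *
      genChoose (2 * (r : ℝ) - g - m) r : ℝ) : ℂ) * (-z) ^ m

lemma smeval_desc (α : ℝ) (m : ℕ) :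
    (descPochhammer ℤ m).smeval α = ∏ i ∈ Finset.range m, (α - i) := by
  induction m with
  | zero => simp [descPochhammer_zero, Polynomial.smeval_one]
  | succ n ih =>
      rw [descPochhammer_succ_right, Polynomial.smeval_mul, ih, Finset.prod_range_succ]
      congr 1
      simp [Polynomial.smeval_sub, Polynomial.smeval_X, Polynomial.smeval_natCast]

lemma genChoose_eq (α : ℝ) (m : ℕ) : genChoose α m = Ring.choose α m := by
  have h := Ring.descPochhammer_eq_factorial_smul_choose (R := ℝ) α m
  rw [smeval_desc, nsmul_eq_mul] at h
  rw [genChoose, h]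
  field_simp

lemma genChoose_natCast (n k : ℕ) : genChoose (n : ℝ) k = n.choose k := by
  rw [genChoose_eq, Ring.choose_natCast]

lemma genChoose_zero (α : ℝ) : genChoose α 0 = 1 := by simp [genChoose]

lemma genChoose_vandermonde (n : ℕ) (x y : ℝ) :
    ∑ i ∈ Finset.range (n + 1), genChoose x i * genChoose y (n - i)
      = genChoose (x + y) n := by
  simp only [genChoose_eq]
  rw [Ring.add_choose_eq n (Commute.all x y), Finset.Nat.sum_antidiagonal_eq_sum_range_succ_mk]

lemma genChoose_mul_nat_choose (α : ℝ) {j k : ℕ} (hjk : j ≤ k) :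
    genChoose α k * (k.choose j : ℝ) = genChoose α j * genChoose (α - j) (k - j) := by
  simp only [genChoose_eq]
  have h := Ring.choose_smul_choose (R := ℝ) α (n := k) (k := j) hjk
  rw [nsmul_eq_mul] at h
  rw [mul_comm, ← h]

lemma genChoose_nonneg {α : ℝ} {m : ℕ} (h : ∀ i : ℕ, i < m → (i : ℝ) ≤ α) :
    0 ≤ genChoose α m := by
  apply div_nonneg _ (by positivity)
  exact Finset.prod_nonneg fun i hi => sub_nonneg.2 (h i (Finset.mem_range.1 hi))

lemma key (r g : ℕ) (hr : 0 < r) (hg : g ≤ 1) {j : ℕ} (hj : j ≤ r) :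
    ∑ k ∈ Finset.range (r + 1),
      (genChoose ((r : ℝ) - g + 1/4) k * genChoose ((r : ℝ) - 1/4) (r - k))
        * (k.choose j : ℝ)
      = genChoose ((r : ℝ) - g + 1/4) j * genChoose (2 * (r : ℝ) - g - j) (r - g) := by
  set α : ℝ := (r : ℝ) - g + 1/4 with hα
  set β : ℝ := (r : ℝ) - 1/4 with hβ
  have hsplit : r + 1 = j + (r - j + 1) := by omega
  rw [hsplit, Finset.sum_range_add]
  have h1 : ∑ k ∈ Finset.range j,
      (genChoose α k * genChoose β (r - k)) * (k.choose j : ℝ) = 0 := by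
    apply Finset.sum_eq_zero
    intro k hk
    rw [Nat.choose_eq_zero_of_lt (Finset.mem_range.1 hk), Nat.cast_zero, mul_zero]
  rw [h1, zero_add]
  have h2 : ∀ i ∈ Finset.range (r - j + 1),
      (genChoose α (j + i) * genChoose β (r - (j + i))) * ((j + i).choose j : ℝ)
        = genChoose α j * (genChoose (α - j) i * genChoose β ((r - j) - i)) := by
    intro i hi
    have := genChoose_mul_nat_choose α (j := j) (k := j + i) (Nat.le_add_right j i)
    rw [Nat.add_sub_cancel_left] at this
    rw [mul_right_comm, this, Nat.sub_sub]
    ring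
  rw [Finset.sum_congr rfl h2, ← Finset.mul_sum, genChoose_vandermonde (r - j)]
  congr 1
  have hcast : ((2 * r - g - j : ℕ) : ℝ) = 2 * (r : ℝ) - g - j := by
    have h' : (2 * r - g - j) + (g + j) = 2 * r := by omega
    have h'' := congrArg (Nat.cast (R := ℝ)) h'
    push_cast at h''
    linarith
  have hc : α - j + β = ((2 * r - g - j : ℕ) : ℝ) := by
    rw [hcast, hα, hβ]; ring
  rw [hc, hcast.symm, genChoose_natCast, genChoose_natCast]
  have : r - j = (2 * r - g - j) - (r - g) := by omega
  rw [this, Nat.choose_symm (by omega)]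

lemma Apoly_eq (r g : ℕ) (hr : 0 < r) (hg : g ≤ 1) (z : ℂ) :
    Apoly r g z = ∑ k ∈ Finset.range (r + 1),
      ((genChoose ((r : ℝ) - g + 1/4) k * genChoose ((r : ℝ) - 1/4) (r - k) : ℝ) : ℂ)
        * (1 - z) ^ k := by
  unfold Apoly
  have h1 : ∀ j ∈ Finset.range (r + 1),
      ((genChoose ((r : ℝ) - g + 1/4) j *
        genChoose (2 * (r : ℝ) - g - j) (r - g) : ℝ) : ℂ) * (-z) ^ j
      = ∑ k ∈ Finset.range (r + 1),
          ((genChoose ((r : ℝ) - g + 1/4) k * genChoose ((r : ℝ) - 1/4) (r - k) : ℝ) : ℂ)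
            * ((k.choose j : ℂ) * (-z) ^ j) := by
    intro j hj
    rw [← key r g hr hg (Finset.mem_range_succ_iff.mp hj)]
    push_cast
    rw [Finset.sum_mul]
    refine Finset.sum_congr rfl fun k _ => by ring
  rw [Finset.sum_congr rfl h1, Finset.sum_comm]
  refine Finset.sum_congr rfl fun k hk => ?_
  rw [← Finset.mul_sum]
  congr 1
  have hkr : k ≤ r := Finset.mem_range_succ_iff.mp hk
  have hsub : Finset.range (k + 1) ⊆ Finset.range (r + 1) := by
    intro x hx
    simp only [Finset.mem_range] at hx ⊢
    omega
  rw [← Finset.sum_subset hsub]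
  · rw [show (1 : ℂ) - z = -z + 1 by ring, add_pow]
    refine Finset.sum_congr rfl fun j _ => by ring_nf
  · intro j hj hj2
    simp only [Finset.mem_range] at hj hj2
    rw [Nat.choose_eq_zero_of_lt (by omega), Nat.cast_zero, zero_mul]

/-- For `|1 - z| ≤ 1`, one has `|A_{r,g}(z)| ≤ C(2r-g, r)` (ordinary binomial). -/
theorem Apoly_bound (r : ℕ) (hr : 0 < r) (g : ℕ) (hg : g = 0 ∨ g = 1)
    (z : ℂ) (hz : ‖1 - z‖ ≤ 1) :
    ‖Apoly r g z‖ ≤ (Nat.choose (2 * r - g) r : ℝ) := by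
  have hg1 : g ≤ 1 := by rcases hg with h | h <;> omega
  set α : ℝ := (r : ℝ) - g + 1/4 with hα
  set β : ℝ := (r : ℝ) - 1/4 with hβ
  have hgR : (g : ℝ) ≤ 1 := by exact_mod_cast hg1
  have hnonneg : ∀ k, k ≤ r → 0 ≤ genChoose α k * genChoose β (r - k) := by
    intro k hk
    apply mul_nonneg
    · apply genChoose_nonneg
      intro i hi
      have : (i : ℝ) + 1 ≤ r := by exact_mod_cast Nat.succ_le_of_lt (lt_of_lt_of_le hi hk)
      rw [hα]; linarith
    · apply genChoose_nonneg
      intro i hi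
      have : (i : ℝ) + 1 ≤ r := by
        exact_mod_cast Nat.succ_le_of_lt (lt_of_lt_of_le hi (Nat.sub_le r k))
      rw [hβ]; linarith
  have hsum : ∑ k ∈ Finset.range (r + 1), genChoose α k * genChoose β (r - k)
      = ((2 * r - g).choose r : ℝ) := by
    have h0 := key r g hr hg1 (Nat.zero_le r)
    simp only [Nat.choose_zero_right, Nat.cast_one, mul_one, Nat.cast_zero, sub_zero,
      genChoose_zero, one_mul] at h0
    rw [h0]
    have hcast : ((2 * r - g : ℕ) : ℝ) = 2 * (r : ℝ) - g := by
      have h' : (2 * r - g) + g = 2 * r := by omega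
      have h'' := congrArg (Nat.cast (R := ℝ)) h'
      push_cast at h''
      linarith
    rw [← hcast, genChoose_natCast]
    have : r - g = (2 * r - g) - r := by omega
    rw [this, Nat.choose_symm (by omega)]
  rw [Apoly_eq r g hr hg1 z]
  calc ‖∑ k ∈ Finset.range (r + 1),
        ((genChoose α k * genChoose β (r - k) : ℝ) : ℂ) * (1 - z) ^ k‖
      ≤ ∑ k ∈ Finset.range (r + 1),
        ‖((genChoose α k * genChoose β (r - k) : ℝ) : ℂ) * (1 - z) ^ k‖ :=
        norm_sum_le _ _
    _ ≤ ∑ k ∈ Finset.range (r + 1), genChoose α k * genChoose β (r - k) := by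
        apply Finset.sum_le_sum
        intro k hk
        have hk' : k ≤ r := Finset.mem_range_succ_iff.mp hk
        rw [norm_mul, norm_pow, Complex.norm_real, Real.norm_eq_abs,
          abs_of_nonneg (hnonneg k hk')]
        calc genChoose α k * genChoose β (r - k) * ‖1 - z‖ ^ k
            ≤ genChoose α k * genChoose β (r - k) * 1 := by
              apply mul_le_mul_of_nonneg_left _ (hnonneg k hk')
              exact pow_le_one₀ (norm_nonneg _) hz
          _ = _ := mul_one _
    _ = ((2 * r - g).choose r : ℝ) := hsum
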